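/- arXiv:1701.00424 — 4 statements merged into one kernel-verified Lean document; each statement's English description precedes it below -/
import Mathlib

section
/- Let n, m be positive integers and let Ā be an (n+m)×(n+m) real matrix of block form Ā = [[A, Ã],[0, I]] with A of size n×n, Ã of size n×m, 0 the m×n zero matrix and I the m×m identity. Assume: (i) Ā_{ij} ≤ 0 for all 1 ≤ i ≤ n and 1 ≤ j ≤ n+m with i ≠ j; (ii) ∑_{j=1}^{n+m} Ā_{ij} ≥ 0 for all 1 ≤ i ≤ n; (iii) A is positive definite. Then for every vector c̄ ∈ ℝ^{n+m} with (Ā c̄)_i ≤ 0 for all 1 ≤ i ≤ n, one has max_{1 ≤ i ≤ n+m} c̄_i ≤ max{0, max_{n+1 ≤ i ≤ n+m} c̄_i}. -/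
open Matrix

/-- discrete weak maximum principle (DwMP). Indices `Sum.inl` are the
`n` interior nodes, `Sum.inr` the `m` boundary nodes. The block structure
`Ā = [[A, Ã],[0, I]]` is expressed by the identity rows for boundary indices. -/
theorem discrete_weak_maximum_principle {n m : ℕ} (hn : 0 < n) (hm : 0 < m)
    (A : Matrix (Fin n ⊕ Fin m) (Fin n ⊕ Fin m) ℝ)
    (hblock : ∀ (i : Fin m) (j : Fin n ⊕ Fin m),
      A (Sum.inr i) j = if Sum.inr i = j then 1 else 0)
    (hoffdiag : ∀ (i : Fin n) (j : Fin n ⊕ Fin m),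
      Sum.inl i ≠ j → A (Sum.inl i) j ≤ 0)
    (hrowsum : ∀ i : Fin n, 0 ≤ ∑ j, A (Sum.inl i) j)
    (hposdef : ∀ x : Fin n → ℝ, x ≠ 0 →
      0 < ∑ i, ∑ j, x i * A (Sum.inl i) (Sum.inl j) * x j)
    (c : Fin n ⊕ Fin m → ℝ)
    (hc : ∀ i : Fin n, (A.mulVec c) (Sum.inl i) ≤ 0) :
    ∀ k : Fin n ⊕ Fin m, c k ≤ max 0 (⨆ i : Fin m, c (Sum.inr i)) := by
  set M := max 0 (⨆ i : Fin m, c (Sum.inr i)) with hMdef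
  have hM0 : (0:ℝ) ≤ M := le_max_left _ _
  have hbd : ∀ j : Fin m, c (Sum.inr j) ≤ M := fun j =>
    le_trans (le_ciSup (f := fun i : Fin m => c (Sum.inr i)) (Set.Finite.bddAbove (Set.finite_range _)) j) (le_max_right _ _)
  set x : Fin n → ℝ := fun i => max (c (Sum.inl i) - M) 0 with hxdef
  have hxnn : ∀ i, 0 ≤ x i := fun i => le_max_right _ _
  have hxge : ∀ i, c (Sum.inl i) - M ≤ x i := fun i => le_max_left _ _
  have hzero : x = 0 := by
    by_contra hne
    have hpos := hposdef x hne
    have hle : ∑ i, ∑ j, x i * A (Sum.inl i) (Sum.inl j) * x j ≤ 0 := by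
      apply Finset.sum_nonpos
      intro i _
      rcases eq_or_lt_of_le (hxnn i) with h0 | h0
      · simp [← h0]
      · have hxi : x i = c (Sum.inl i) - M := by
          rcases le_or_gt (c (Sum.inl i) - M) 0 with h | h
          · have : x i = 0 := max_eq_right h
            linarith
          · exact max_eq_left h.le
        have hinner : ∑ j, A (Sum.inl i) (Sum.inl j) * x j ≤ 0 := by
          have step1 : ∑ j, A (Sum.inl i) (Sum.inl j) * x j ≤
              ∑ j, A (Sum.inl i) (Sum.inl j) * (c (Sum.inl j) - M) := by
            apply Finset.sum_le_sum
            intro j _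
            rcases eq_or_ne i j with rfl | hij
            · rw [hxi]
            · have hA := hoffdiag i (Sum.inl j) (by simpa using hij)
              nlinarith [hxge j]
          have hsplit : (A.mulVec c) (Sum.inl i) =
              (∑ j : Fin n, A (Sum.inl i) (Sum.inl j) * c (Sum.inl j))
              + ∑ j : Fin m, A (Sum.inl i) (Sum.inr j) * c (Sum.inr j) := by
            simp [Matrix.mulVec, dotProduct, Fintype.sum_sum_type]
          have hrs : ∑ j, A (Sum.inl i) j =
              (∑ j : Fin n, A (Sum.inl i) (Sum.inl j))
              + ∑ j : Fin m, A (Sum.inl i) (Sum.inr j) := by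
            simp [Fintype.sum_sum_type]
          have h3 : (∑ j : Fin m, A (Sum.inl i) (Sum.inr j)) * M ≤
              ∑ j : Fin m, A (Sum.inl i) (Sum.inr j) * c (Sum.inr j) := by
            rw [Finset.sum_mul]
            apply Finset.sum_le_sum
            intro j _
            have hA := hoffdiag i (Sum.inr j) (by simp)
            nlinarith [hbd j]
          have hrow := hrowsum i
          have hci := hc i
          rw [hsplit] at hci
          rw [hrs] at hrow
          have step2 : ∑ j : Fin n, A (Sum.inl i) (Sum.inl j) * (c (Sum.inl j) - M) =
              (∑ j : Fin n, A (Sum.inl i) (Sum.inl j) * c (Sum.inl j))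
              - (∑ j : Fin n, A (Sum.inl i) (Sum.inl j)) * M := by
            rw [Finset.sum_mul, ← Finset.sum_sub_distrib]
            apply Finset.sum_congr rfl
            intro j _
            ring
          nlinarith [mul_nonneg hrow hM0]
        have hterm : ∑ j, x i * A (Sum.inl i) (Sum.inl j) * x j =
            x i * ∑ j, A (Sum.inl i) (Sum.inl j) * x j := by
          rw [Finset.mul_sum]
          apply Finset.sum_congr rfl
          intro j _
          ring
        rw [hterm]
        exact mul_nonpos_of_nonneg_of_nonpos (hxnn i) hinner
    linarith
  intro k
  rcases k with i | j
  · have hx0 : x i = 0 := congrFun hzero i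
    have := hxge i
    rw [hx0] at this
    linarith
  · exact hbd j
end

section
/- Let Ā = [[A, Ã],[0, I]] be an (n+m)×(n+m) real matrix satisfying: (i) Ā_{ij} ≤ 0 for all 1 ≤ i ≤ n, j ≠ i; (ii) ∑_{j=1}^{n+m} Ā_{ij} = 0 for all 1 ≤ i ≤ n; (iii) A positive definite. Then for every c̄ ∈ ℝ^{n+m} with (Ā c̄)_i ≤ 0 for 1 ≤ i ≤ n, one has max_{1 ≤ i ≤ n+m} c̄_i = max_{n+1 ≤ i ≤ n+m} c̄_i. -/
private lemma mul_nonneg_of_nonpos_nonpos' {a b : ℝ} (ha : a ≤ 0) (hb : b ≤ 0) :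
    0 ≤ a * b := by nlinarith


open Matrix

/-- discrete strict weak maximum principle (DWMP): with zero interior
row sums, the maximum of the solution vector is attained at a boundary index. -/
theorem discrete_strict_weak_maximum_principle {n m : ℕ} (hn : 0 < n) (hm : 0 < m)
    (A : Matrix (Fin n ⊕ Fin m) (Fin n ⊕ Fin m) ℝ)
    (hblock : ∀ (i : Fin m) (j : Fin n ⊕ Fin m),
      A (Sum.inr i) j = if Sum.inr i = j then 1 else 0)
    (hoffdiag : ∀ (i : Fin n) (j : Fin n ⊕ Fin m),
      Sum.inl i ≠ j → A (Sum.inl i) j ≤ 0)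
    (hrowsum : ∀ i : Fin n, ∑ j, A (Sum.inl i) j = 0)
    (hposdef : ∀ x : Fin n → ℝ, x ≠ 0 →
      0 < ∑ i, ∑ j, x i * A (Sum.inl i) (Sum.inl j) * x j)
    (c : Fin n ⊕ Fin m → ℝ)
    (hc : ∀ i : Fin n, (A.mulVec c) (Sum.inl i) ≤ 0) :
    (⨆ k : Fin n ⊕ Fin m, c k) = ⨆ i : Fin m, c (Sum.inr i) := by
  haveI : Nonempty (Fin n) := ⟨⟨0, hn⟩⟩
  haveI : Nonempty (Fin m) := ⟨⟨0, hm⟩⟩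
  set M := ⨆ i : Fin m, c (Sum.inr i) with hMdef
  have hM : ∀ j : Fin m, c (Sum.inr j) ≤ M :=
    fun j => le_ciSup (f := fun i : Fin m => c (Sum.inr i)) (Set.Finite.bddAbove (Set.finite_range _)) j
  set x : Fin n → ℝ := fun i => max (c (Sum.inl i) - M) 0 with hxdef
  have hxnn : ∀ i, 0 ≤ x i := fun i => le_max_right _ _
  have hxge : ∀ i, c (Sum.inl i) - M ≤ x i := fun i => le_max_left _ _
  -- key: for interior rows, ∑ k A_ik (c k - M) = (A c)_i ≤ 0
  have hkey : ∀ i : Fin n, ∑ k, A (Sum.inl i) k * (c k - M) ≤ 0 := by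
    intro i
    have heq : ∑ k, A (Sum.inl i) k * (c k - M)
        = (A.mulVec c) (Sum.inl i) - (∑ k, A (Sum.inl i) k) * M := by
      simp only [Matrix.mulVec, dotProduct, Finset.sum_sub_distrib, mul_sub,
        Finset.sum_mul]
    rw [heq, hrowsum i]
    simpa using hc i
  have hQ : ∑ i, ∑ j, x i * A (Sum.inl i) (Sum.inl j) * x j ≤ 0 := by
    apply Finset.sum_nonpos
    intro i _
    by_cases hxi : x i = 0
    · simp [hxi]
    · have hdpos : 0 < c (Sum.inl i) - M := by
        by_contra h
        push_neg at h
        exact hxi (max_eq_right h)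
      have hdi : x i = c (Sum.inl i) - M := max_eq_left hdpos.le
      have hinner : ∑ j, A (Sum.inl i) (Sum.inl j) * x j
          ≤ ∑ k, A (Sum.inl i) k * (c k - M) := by
        rw [Fintype.sum_sum_type]
        have hbd : 0 ≤ ∑ j : Fin m, A (Sum.inl i) (Sum.inr j) * (c (Sum.inr j) - M) := by
          apply Finset.sum_nonneg
          intro j _
          exact mul_nonneg_of_nonpos_nonpos' (hoffdiag i _ (by simp))
            (sub_nonpos.mpr (hM j))
        have hint : ∑ j : Fin n, A (Sum.inl i) (Sum.inl j) * x j
            ≤ ∑ j : Fin n, A (Sum.inl i) (Sum.inl j) * (c (Sum.inl j) - M) := by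
          apply Finset.sum_le_sum
          intro j _
          by_cases hji : j = i
          · subst hji; rw [hdi]
          · exact mul_le_mul_of_nonpos_left (hxge j)
              (hoffdiag i _ (by simp [Ne, Sum.inl.injEq]; exact fun h => hji h.symm))
        linarith
      have hle : ∑ j, x i * A (Sum.inl i) (Sum.inl j) * x j
          = x i * ∑ j, A (Sum.inl i) (Sum.inl j) * x j := by
        rw [Finset.mul_sum]; congr 1; ext j; ring
      rw [hle]
      exact mul_nonpos_of_nonneg_of_nonpos (hxnn i) (le_trans hinner (hkey i))
  have hx0 : x = 0 := by
    by_contra h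
    exact absurd (hposdef x h) (not_lt.mpr hQ)
  have hint : ∀ i : Fin n, c (Sum.inl i) ≤ M := by
    intro i
    have : x i = 0 := by rw [hx0]; rfl
    have := hxge i
    rw [‹x i = 0›] at this
    linarith
  apply le_antisymm
  · apply ciSup_le
    intro k
    cases k with
    | inl i => exact hint i
    | inr j => exact hM j
  · exact ciSup_le fun j => le_ciSup (f := fun k : Fin n ⊕ Fin m => c k) (Set.Finite.bddAbove (Set.finite_range _)) (Sum.inr j)
end

section
/- Under the hypotheses of the DwMP matrix theorem (Ā = [[A, Ã],[0, I]] with off-diagonal entries of the first n rows nonpositive, nonnegative row sums for the first n rows, and A positive definite), if c̄ ∈ ℝ^{n+m} satisfies (Ā c̄)_i ≥ 0 for all 1 ≤ i ≤ n, then min_{1 ≤ i ≤ n+m} c̄_i ≥ min{0, min_{n+1 ≤ i ≤ n+m} c̄_i}. -/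
open Matrix

/-- discrete minimum principle, from the DwMP matrix hypotheses:
if `(Āc)_i ≥ 0` on interior rows then
`min_k c_k ≥ min{0, min over boundary indices of c}`. -/
theorem discrete_minimum_principle {n m : ℕ} (hn : 0 < n) (hm : 0 < m)
    (A : Matrix (Fin n ⊕ Fin m) (Fin n ⊕ Fin m) ℝ)
    (hblock : ∀ (i : Fin m) (j : Fin n ⊕ Fin m),
      A (Sum.inr i) j = if Sum.inr i = j then 1 else 0)
    (hoffdiag : ∀ (i : Fin n) (j : Fin n ⊕ Fin m),
      Sum.inl i ≠ j → A (Sum.inl i) j ≤ 0)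
    (hrowsum : ∀ i : Fin n, 0 ≤ ∑ j, A (Sum.inl i) j)
    (hposdef : ∀ x : Fin n → ℝ, x ≠ 0 →
      0 < ∑ i, ∑ j, x i * A (Sum.inl i) (Sum.inl j) * x j)
    (c : Fin n ⊕ Fin m → ℝ)
    (hc : ∀ i : Fin n, 0 ≤ (A.mulVec c) (Sum.inl i)) :
    ∀ k : Fin n ⊕ Fin m, min 0 (⨅ i : Fin m, c (Sum.inr i)) ≤ c k := by
  set b := min 0 (⨅ i : Fin m, c (Sum.inr i)) with hbdef
  have hb0 : b ≤ 0 := min_le_left _ _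
  have hbbd : ∀ j : Fin m, b ≤ c (Sum.inr j) := fun j =>
    le_trans (min_le_right _ _)
      (ciInf_le (Set.Finite.bddBelow (Set.finite_range _)) j)
  set x : Fin n → ℝ := fun i => min (c (Sum.inl i) - b) 0 with hxdef
  have hxle : ∀ i, x i ≤ 0 := fun i => min_le_right _ _
  have hxle' : ∀ i, x i ≤ c (Sum.inl i) - b := fun i => min_le_left _ _
  have key : ∀ i : Fin n, x i ≠ 0 →
      0 ≤ ∑ j : Fin n, A (Sum.inl i) (Sum.inl j) * x j := by
    intro i hxi
    have hci : c (Sum.inl i) - b < 0 := by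
      by_contra h
      exact hxi (min_eq_right (not_lt.mp h))
    have h1 : ∑ j : Fin n, A (Sum.inl i) (Sum.inl j) * (c (Sum.inl j) - b)
        ≤ ∑ j : Fin n, A (Sum.inl i) (Sum.inl j) * x j := by
      apply Finset.sum_le_sum
      intro j _
      rcases eq_or_ne j i with rfl | hne
      · have : x j = c (Sum.inl j) - b := min_eq_left hci.le
        rw [this]
      · exact mul_le_mul_of_nonpos_left (hxle' j)
          (hoffdiag i (Sum.inl j) (by simp [Ne.symm hne]))
    have hsplit : ∑ j : Fin n, A (Sum.inl i) (Sum.inl j) * (c (Sum.inl j) - b)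
        + ∑ j : Fin m, A (Sum.inl i) (Sum.inr j) * (c (Sum.inr j) - b)
        = (A.mulVec c) (Sum.inl i) - b * ∑ j, A (Sum.inl i) j := by
      rw [← Fintype.sum_sum_type (f := fun j => A (Sum.inl i) j * (c j - b))]
      simp only [mulVec, dotProduct, Finset.mul_sum]
      rw [← Finset.sum_sub_distrib]
      apply Finset.sum_congr rfl
      intro j _
      ring
    have hAc := hc i
    have hbrs : b * ∑ j, A (Sum.inl i) j ≤ 0 :=
      mul_nonpos_iff.mpr (Or.inr ⟨hb0, hrowsum i⟩)
    have hbd : ∑ j : Fin m, A (Sum.inl i) (Sum.inr j) * (c (Sum.inr j) - b) ≤ 0 := by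
      apply Finset.sum_nonpos
      intro j _
      exact mul_nonpos_iff.mpr
        (Or.inr ⟨hoffdiag i (Sum.inr j) (by simp), sub_nonneg.mpr (hbbd j)⟩)
    linarith
  have hquad : ∑ i, ∑ j, x i * A (Sum.inl i) (Sum.inl j) * x j ≤ 0 := by
    apply Finset.sum_nonpos
    intro i _
    rcases eq_or_ne (x i) 0 with h | h
    · simp [h]
    · have h0 := key i h
      have heq : ∑ j, x i * A (Sum.inl i) (Sum.inl j) * x j
          = x i * ∑ j, A (Sum.inl i) (Sum.inl j) * x j := by
        rw [Finset.mul_sum]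
        apply Finset.sum_congr rfl
        intros
        ring
      rw [heq]
      exact mul_nonpos_iff.mpr (Or.inr ⟨lt_of_le_of_ne (hxle i) h |>.le, h0⟩)
  have hx0 : x = 0 := by
    by_contra h
    exact absurd hquad (not_le.mpr (hposdef x h))
  intro k
  rcases k with i | j
  · have hxi : x i = 0 := congrFun hx0 i
    have : (0 : ℝ) ≤ c (Sum.inl i) - b := min_eq_right_iff.mp hxi
    linarith
  · exact hbbd j
end

section
/- Under the DwMP matrix hypotheses, if c̄ ∈ ℝ^{n+m} satisfies (Ā c̄)_i ≤ 0 for 1 ≤ i ≤ n and c̄_i ≤ 0 for all n+1 ≤ i ≤ n+m, then c̄_i ≤ 0 for all 1 ≤ i ≤ n+m (discrete nonpositivity property). -/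
open Matrix

/-- discrete nonpositivity property: under the DwMP matrix hypotheses,
`(Āc)_i ≤ 0` on interior rows and `c ≤ 0` on boundary indices imply `c ≤ 0`. -/
theorem discrete_nonpositivity {n m : ℕ} (hn : 0 < n) (hm : 0 < m)
    (A : Matrix (Fin n ⊕ Fin m) (Fin n ⊕ Fin m) ℝ)
    (hblock : ∀ (i : Fin m) (j : Fin n ⊕ Fin m),
      A (Sum.inr i) j = if Sum.inr i = j then 1 else 0)
    (hoffdiag : ∀ (i : Fin n) (j : Fin n ⊕ Fin m),
      Sum.inl i ≠ j → A (Sum.inl i) j ≤ 0)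
    (hrowsum : ∀ i : Fin n, 0 ≤ ∑ j, A (Sum.inl i) j)
    (hposdef : ∀ x : Fin n → ℝ, x ≠ 0 →
      0 < ∑ i, ∑ j, x i * A (Sum.inl i) (Sum.inl j) * x j)
    (c : Fin n ⊕ Fin m → ℝ)
    (hc : ∀ i : Fin n, (A.mulVec c) (Sum.inl i) ≤ 0)
    (hbd : ∀ i : Fin m, c (Sum.inr i) ≤ 0) :
    ∀ k : Fin n ⊕ Fin m, c k ≤ 0 := by
  set v : Fin n → ℝ := fun i => max (c (Sum.inl i)) 0 with hvdef
  have hvnn : ∀ i, 0 ≤ v i := fun i => le_max_right _ _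
  have hv0 : v = 0 := by
    by_contra hne
    have hpos := hposdef v hne
    have hle : ∑ i, ∑ j, v i * A (Sum.inl i) (Sum.inl j) * v j ≤ 0 := by
      apply Finset.sum_nonpos
      intro i _
      rcases (hvnn i).eq_or_lt with h0 | h0
      · have : ∀ j ∈ Finset.univ, v i * A (Sum.inl i) (Sum.inl j) * v j = 0 := by
          intro j _; rw [← h0]; ring
        rw [Finset.sum_eq_zero this]
      · have hci : 0 < c (Sum.inl i) := by
          by_contra hci
          push_neg at hci
          have : v i = 0 := max_eq_right hci
          linarith
        have hvi : v i = c (Sum.inl i) := max_eq_left hci.le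
        have key : ∑ j, A (Sum.inl i) (Sum.inl j) * v j ≤ 0 := by
          have step1 : ∑ j, A (Sum.inl i) (Sum.inl j) * v j
              ≤ ∑ j, A (Sum.inl i) (Sum.inl j) * c (Sum.inl j) := by
            apply Finset.sum_le_sum
            intro j _
            by_cases hij : j = i
            · subst hij; rw [hvi]
            · have hA : A (Sum.inl i) (Sum.inl j) ≤ 0 := by
                exact hoffdiag _ _ fun h => hij (Sum.inl.inj h).symm
              exact mul_le_mul_of_nonpos_left (le_max_left _ _) hA
          have step2 : ∑ j, A (Sum.inl i) (Sum.inl j) * c (Sum.inl j)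
              ≤ (A.mulVec c) (Sum.inl i) := by
            have hmv : (A.mulVec c) (Sum.inl i)
                = ∑ j, A (Sum.inl i) (Sum.inl j) * c (Sum.inl j)
                  + ∑ j, A (Sum.inl i) (Sum.inr j) * c (Sum.inr j) := by
              simp [Matrix.mulVec, dotProduct, Fintype.sum_sum_type]
            have hbdsum : 0 ≤ ∑ j, A (Sum.inl i) (Sum.inr j) * c (Sum.inr j) := by
              apply Finset.sum_nonneg
              intro j _
              nlinarith [hoffdiag i (Sum.inr j) (by simp : (Sum.inl i : Fin n ⊕ Fin m) ≠ Sum.inr j), hbd j]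
            linarith [hmv]
          linarith [hc i, step1, step2]
        calc ∑ j, v i * A (Sum.inl i) (Sum.inl j) * v j
            = v i * ∑ j, A (Sum.inl i) (Sum.inl j) * v j := by
              rw [Finset.mul_sum]; apply Finset.sum_congr rfl; intro j _; ring
          _ ≤ 0 := mul_nonpos_of_nonneg_of_nonpos (hvnn i) key
    linarith
  intro k
  cases k with
  | inl i =>
    have h0 : v i = 0 := by rw [hv0]; rfl
    have h1 : c (Sum.inl i) ≤ v i := le_max_left _ _
    rw [h0] at h1
    exact h1
  | inr i => exact hbd i
end
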